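/- Let $\mu$ be an absolutely continuous probability measure on a rectangle $\mathcal{R} = [0,\pi] \times [0,2\pi]$ (with respect to Lebesgue measure), and let $\xi_1,\dots,\xi_K$ be drawn i.i.d. from $\mu$. Let $\mathcal{M} = \{(r_1,s_1),\dots,(r_N,s_N)\}$ be a set of distinct integer pairs with $N \geq K$, $r_q \geq 0$. Define the $K \times N$ matrix $G$ with entries $g_{pq} = (\cos\theta_p)^{r_q}(\sin\theta_p)^{|s_q|} e^{i\phi_p s_q}$ where $\xi_p = (\theta_p, \phi_p)$. Then with probability one, $G$ has full row rank $K$. -/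

import Mathlib

open MeasureTheory Real
open scoped Polynomial

noncomputable def vfun {N : ℕ} (r : Fin N → ℕ) (s : Fin N → ℤ) (x : ℝ × ℝ) : Fin N → ℂ :=
  fun q => (Real.cos x.1 : ℂ) ^ (r q) * (Real.sin x.1 : ℂ) ^ (s q).natAbs *
    Complex.exp (Complex.I * s q * x.2)

lemma vfun_continuous {N : ℕ} (r : Fin N → ℕ) (s : Fin N → ℤ) :
    Continuous fun x => vfun r s x := by
  unfold vfun
  fun_prop

lemma annihilator {N k : ℕ} (hk : k < N) (w : Fin k → Fin N → ℂ) :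
    ∃ b : Fin N → ℂ, (∃ q, b q ≠ 0) ∧
      ∀ u ∈ Submodule.span ℂ (Set.range w), ∑ q, b q * u q = 0 := by
  set L : (Fin N → ℂ) →ₗ[ℂ] (Fin k → ℂ) := Matrix.mulVecLin (Matrix.of w) with hL
  have hker : LinearMap.ker L ≠ ⊥ := by
    intro h
    have hinj := LinearMap.ker_eq_bot.mp h
    have := LinearMap.finrank_le_finrank_of_injective hinj
    simp [Module.finrank_fintype_fun_eq_card] at this
    omega
  obtain ⟨b, hbmem, hb0⟩ := Submodule.exists_mem_ne_zero_of_ne_bot hker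
  refine ⟨b, Function.ne_iff.mp hb0, ?_⟩
  have hb : ∀ i, ∑ q, w i q * b q = 0 := by
    intro i
    have : L b = 0 := LinearMap.mem_ker.mp hbmem
    have := congrFun this i
    simpa [hL, Matrix.mulVecLin, Matrix.mulVec, dotProduct] using this
  let φL : (Fin N → ℂ) →ₗ[ℂ] ℂ :=
    { toFun := fun u => ∑ q, b q * u q
      map_add' := by intro u v; simp [mul_add, Finset.sum_add_distrib]
      map_smul' := by
        intro c u
        simp only [Pi.smul_apply, smul_eq_mul, RingHom.id_apply, Finset.mul_sum]
        exact Finset.sum_congr rfl fun q _ => by ring }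
  intro u hu
  have hle : Submodule.span ℂ (Set.range w) ≤ LinearMap.ker φL := by
    rw [Submodule.span_le]
    rintro _ ⟨i, rfl⟩
    simp only [SetLike.mem_coe, LinearMap.mem_ker]
    show ∑ q, b q * w i q = 0
    rw [← hb i]
    exact Finset.sum_congr rfl fun q _ => mul_comm _ _
  exact hle hu

lemma countable_cos_fiber (w : ℂ) : Set.Countable {θ : ℝ | (Real.cos θ : ℂ) = w} := by
  rcases Set.eq_empty_or_nonempty {θ : ℝ | (Real.cos θ : ℂ) = w} with h | ⟨θ₀, hθ₀⟩
  · exact h ▸ Set.countable_empty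
  · have : {θ : ℝ | (Real.cos θ : ℂ) = w} ⊆
        Set.range (fun p : ℤ × Bool =>
          if p.2 then 2 * p.1 * π + θ₀ else 2 * p.1 * π - θ₀) := by
      intro θ hθ
      have hcc : Real.cos θ₀ = Real.cos θ := by
        have : (Real.cos θ : ℂ) = (Real.cos θ₀ : ℂ) := by
          rw [hθ, hθ₀]
        exact_mod_cast this.symm
      obtain ⟨k, hk | hk⟩ := Real.cos_eq_cos_iff.mp hcc
      · exact ⟨(k, true), by simp [hk]⟩
      · exact ⟨(k, false), by simp [hk]⟩
    exact Set.Countable.mono this (Set.countable_range _)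

lemma countable_exp_fiber (w : ℂ) :
    Set.Countable {φ : ℝ | Complex.exp (Complex.I * φ) = w} := by
  rcases Set.eq_empty_or_nonempty {φ : ℝ | Complex.exp (Complex.I * φ) = w}
    with h | ⟨φ₀, hφ₀⟩
  · exact h ▸ Set.countable_empty
  · have : {φ : ℝ | Complex.exp (Complex.I * φ) = w} ⊆
        Set.range (fun n : ℤ => φ₀ + n * (2 * π)) := by
      intro φ hφ
      have hee : Complex.exp (Complex.I * φ) = Complex.exp (Complex.I * φ₀) := by
        rw [hφ, hφ₀]
      obtain ⟨n, hn⟩ := Complex.exp_eq_exp_iff_exists_int.mp hee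
      refine ⟨n, ?_⟩
      have hI : Complex.I * φ = Complex.I * (φ₀ + n * (2 * π)) := by
        rw [hn]; ring
      have := mul_left_cancel₀ Complex.I_ne_zero hI
      exact_mod_cast this.symm
    exact Set.Countable.mono this (Set.countable_range _)

lemma countable_sin_zero : Set.Countable {θ : ℝ | Real.sin θ = 0} := by
  have : {θ : ℝ | Real.sin θ = 0} ⊆ Set.range (fun n : ℤ => (n : ℝ) * π) := by
    intro θ hθ
    obtain ⟨n, hn⟩ := Real.sin_eq_zero_iff.mp hθ
    exact ⟨n, hn⟩
  exact Set.Countable.mono this (Set.countable_range _)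

lemma countable_root_preimage {f : ℝ → ℂ} (P : Polynomial ℂ) (hP : P ≠ 0)
    (hfib : ∀ w : ℂ, Set.Countable {x : ℝ | f x = w}) :
    Set.Countable {x : ℝ | P.eval (f x) = 0} := by
  have hroots : Set.Finite {z : ℂ | P.IsRoot z} := Polynomial.finite_setOf_isRoot hP
  have hsub : {x : ℝ | P.eval (f x) = 0} ⊆ ⋃ w ∈ {z : ℂ | P.IsRoot z}, {x : ℝ | f x = w} := by
    intro x hx
    exact Set.mem_biUnion (show f x ∈ {z : ℂ | P.IsRoot z} from hx) rfl
  exact Set.Countable.mono hsub (hroots.countable.biUnion fun w _ => hfib w)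

lemma key_null {N : ℕ} (r : Fin N → ℕ) (s : Fin N → ℤ)
    (hdist : Function.Injective (fun q => (r q, s q)))
    (b : Fin N → ℂ) (q₀ : Fin N) (hb : b q₀ ≠ 0) :
    volume {x : ℝ × ℝ | ∑ q, b q * vfun r s x q = 0} = 0 := by
  classical
  set Z : Set (ℝ × ℝ) := {x : ℝ × ℝ | ∑ q, b q * vfun r s x q = 0} with hZ
  -- the polynomial in cos θ
  set Q : Finset (Fin N) := Finset.univ.filter (fun q => s q = s q₀) with hQ
  have hq₀Q : q₀ ∈ Q := by simp [hQ]
  set P : Polynomial ℂ := ∑ q ∈ Q, Polynomial.C (b q) * Polynomial.X ^ (r q) with hP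
  have hPc : P.coeff (r q₀) = b q₀ := by
    rw [hP, Polynomial.finset_sum_coeff]
    rw [Finset.sum_eq_single_of_mem q₀ hq₀Q]
    · simp [Polynomial.coeff_C_mul, Polynomial.coeff_X_pow]
    · intro q hq hne
      simp only [Polynomial.coeff_C_mul, Polynomial.coeff_X_pow, mul_ite, mul_one, mul_zero]
      rw [if_neg]
      intro hrq
      exact hne (hdist (by
        have hsq : s q = s q₀ := by simpa [hQ] using hq
        simp [hrq.symm, hsq]))
  have hPne : P ≠ 0 := fun h => hb (by rw [← hPc, h, Polynomial.coeff_zero])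
  -- the coefficient function c θ
  set c : ℝ → ℂ := fun θ =>
    ∑ q ∈ Q, b q * (Real.cos θ : ℂ) ^ (r q) * (Real.sin θ : ℂ) ^ (s q).natAbs with hc
  have hceq : ∀ θ, c θ = (Real.sin θ : ℂ) ^ (s q₀).natAbs * P.eval (Real.cos θ : ℂ) := by
    intro θ
    rw [hc, hP, Polynomial.eval_finset_sum, Finset.mul_sum]
    refine Finset.sum_congr rfl fun q hq => ?_
    have hsq : s q = s q₀ := by simpa [hQ] using hq
    simp [hsq]
    ring
  -- c vanishes only countably
  have hccount : Set.Countable {θ : ℝ | c θ = 0} := by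
    have hsub : {θ : ℝ | c θ = 0} ⊆
        {θ : ℝ | Real.sin θ = 0} ∪ {θ : ℝ | P.eval ((Real.cos θ : ℝ) : ℂ) = 0} := by
      intro θ hθ
      have h0 : ((Real.sin θ : ℂ)) ^ (s q₀).natAbs * P.eval (Real.cos θ : ℂ) = 0 := by
        rw [← hceq θ]; exact hθ
      rcases mul_eq_zero.mp h0 with h | h
      · left
        have := pow_eq_zero_iff'.mp h
        exact_mod_cast this.1
      · right; exact h
    exact Set.Countable.mono hsub
      (countable_sin_zero.union
        (countable_root_preimage P hPne countable_cos_fiber))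
  -- Z is measurable
  have hZmeas : MeasurableSet Z := by
    have hcont : Continuous fun x : ℝ × ℝ => ∑ q, b q * vfun r s x q := by
      have := vfun_continuous r s
      fun_prop
    exact hcont.measurable (measurableSet_singleton 0)
  rw [show (volume : Measure (ℝ × ℝ)) = (volume : Measure ℝ).prod volume from Measure.volume_eq_prod ℝ ℝ]
  rw [Measure.measure_prod_null hZmeas]
  have hae : ∀ᵐ θ : ℝ, c θ ≠ 0 := by
    rw [ae_iff]
    simpa using hccount.measure_zero volume
  filter_upwards [hae] with θ hθ
  -- now fix θ with c θ ≠ 0 ; show the φ-section is null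
  set A : Fin N → ℂ := fun q =>
    b q * (Real.cos θ : ℂ) ^ (r q) * (Real.sin θ : ℂ) ^ (s q).natAbs with hA
  set mN : ℕ := ∑ q, (s q).natAbs with hmN
  have hmq : ∀ q, (0 : ℤ) ≤ s q + mN := by
    intro q
    have h : (s q).natAbs ≤ mN := by
      rw [hmN]
      exact Finset.single_le_sum (f := fun q => (s q).natAbs) (fun i _ => Nat.zero_le _)
        (Finset.mem_univ q)
    omega
  set P₂ : Polynomial ℂ := ∑ q, Polynomial.C (A q) * Polynomial.X ^ (s q + mN).toNat with hP₂
  have hcond : ∀ q, ((s q + mN).toNat = (s q₀ + mN).toNat ↔ s q = s q₀) := by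
    intro q
    have h1 := hmq q
    have h2 := hmq q₀
    omega
  have hP₂c : P₂.coeff ((s q₀ + mN).toNat) = c θ := by
    have hcθ : c θ = ∑ q ∈ Q, A q := rfl
    rw [hP₂, Polynomial.finset_sum_coeff, hcθ, hQ, Finset.sum_filter]
    refine Finset.sum_congr rfl fun q _ => ?_
    simp only [Polynomial.coeff_C_mul, Polynomial.coeff_X_pow, mul_ite, mul_one, mul_zero]
    by_cases h : s q = s q₀
    · rw [if_pos ((hcond q).mpr h).symm, if_pos h]
    · rw [if_neg (fun hh => h ((hcond q).mp hh.symm)), if_neg h]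
  have hP₂ne : P₂ ≠ 0 := fun h => hθ (by rw [← hP₂c, h, Polynomial.coeff_zero])
  have hsub : Prod.mk θ ⁻¹' Z ⊆ {φ : ℝ | P₂.eval (Complex.exp (Complex.I * φ)) = 0} := by
    intro φ hφ
    have hf : ∑ q, b q * vfun r s (θ, φ) q = 0 := hφ
    have heval : P₂.eval (Complex.exp (Complex.I * φ)) =
        Complex.exp (Complex.I * mN * φ) * ∑ q, b q * vfun r s (θ, φ) q := by
      rw [hP₂, Polynomial.eval_finset_sum, Finset.mul_sum]
      refine Finset.sum_congr rfl fun q _ => ?_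
      simp only [Polynomial.eval_mul, Polynomial.eval_C, Polynomial.eval_pow, Polynomial.eval_X]
      have hexp : Complex.exp (Complex.I * φ) ^ (s q + (mN : ℤ)).toNat =
          Complex.exp (Complex.I * s q * φ) * Complex.exp (Complex.I * mN * φ) := by
        rw [← Complex.exp_nat_mul, ← Complex.exp_add]
        congr 1
        have h1 : (((s q + (mN : ℤ)).toNat : ℤ) : ℂ) = ((s q : ℂ) + (mN : ℂ)) := by
          rw [Int.toNat_of_nonneg (hmq q)]; push_cast; ring
        have h2 : (((s q + (mN : ℤ)).toNat : ℕ) : ℂ) = ((s q : ℂ) + (mN : ℂ)) := by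
          exact_mod_cast h1
        rw [h2]; ring
      rw [hexp]
      show A q * _ = _
      simp only [hA, vfun]
      ring
    rw [Set.mem_setOf_eq, heval, hf, mul_zero]
  exact measure_mono_null hsub
    ((countable_root_preimage P₂ hP₂ne countable_exp_fiber).measure_zero _)

lemma indep_null {N : ℕ} (r : Fin N → ℕ) (s : Fin N → ℤ)
    (hdist : Function.Injective (fun q => (r q, s q)))
    (μ : Measure (ℝ × ℝ)) [IsProbabilityMeasure μ] (hac : μ ≪ volume) :
    ∀ k, k ≤ N →
      (Measure.pi fun _ : Fin k => μ)
        {ξ : Fin k → ℝ × ℝ | ¬ LinearIndependent ℂ (fun p => vfun r s (ξ p))} = 0 := by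
  intro k
  induction k with
  | zero =>
    intro _
    convert measure_empty (μ := Measure.pi fun _ : Fin 0 => μ)
    rw [Set.eq_empty_iff_forall_notMem]
    intro ξ hξ
    exact hξ (linearIndependent_empty_type)
  | succ k ih =>
    intro hk1
    have hIH := ih (Nat.le_of_succ_le hk1)
    have hkN : k < N := hk1
    -- the non-linear-independent set in the product picture
    set D : Set (Fin k → ℝ × ℝ) :=
      {η : Fin k → ℝ × ℝ | ¬ LinearIndependent ℂ (fun p => vfun r s (η p))} with hD
    have hDmeas : MeasurableSet D := by
      have hcont : Continuous (fun η : Fin k → ℝ × ℝ => fun p => vfun r s (η p)) :=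
        continuous_pi fun p => (vfun_continuous r s).comp (continuous_apply p)
      have : D = (fun η : Fin k → ℝ × ℝ => fun p => vfun r s (η p)) ⁻¹'
          {f : Fin k → Fin N → ℂ | LinearIndependent ℂ f}ᶜ := rfl
      rw [this]
      exact hcont.measurable (isOpen_setOf_linearIndependent.measurableSet.compl)
    set Bad' : Set ((ℝ × ℝ) × (Fin k → ℝ × ℝ)) :=
      {p | ¬ LinearIndependent ℂ
        (Fin.cons (vfun r s p.1) (fun j => vfun r s (p.2 j)) : Fin (k + 1) → Fin N → ℂ)}
      with hBad'
    have hBmeas : MeasurableSet Bad' := by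
      have hcont : Continuous (fun p : (ℝ × ℝ) × (Fin k → ℝ × ℝ) =>
          (Fin.cons (vfun r s p.1) (fun j => vfun r s (p.2 j)) : Fin (k + 1) → Fin N → ℂ)) := by
        refine continuous_pi fun i => ?_
        refine Fin.cases ?_ ?_ i
        · simpa [Function.comp_def] using (vfun_continuous r s).comp continuous_fst
        · intro j
          simpa [Function.comp_def] using (vfun_continuous r s).comp ((continuous_apply j).comp continuous_snd)
      have : Bad' = (fun p : (ℝ × ℝ) × (Fin k → ℝ × ℝ) =>
          (Fin.cons (vfun r s p.1) (fun j => vfun r s (p.2 j)) : Fin (k + 1) → Fin N → ℂ)) ⁻¹'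
          {f : Fin (k + 1) → Fin N → ℂ | LinearIndependent ℂ f}ᶜ := rfl
      rw [this]
      exact hcont.measurable (isOpen_setOf_linearIndependent.measurableSet.compl)
    -- the product measure of Bad' is zero
    have hprod : (μ.prod (Measure.pi fun _ : Fin k => μ)) Bad' = 0 := by
      have hsplit : Bad' ⊆ (Set.univ ×ˢ D) ∪ (Bad' ∩ (Set.univ ×ˢ Dᶜ)) := by
        intro p hp
        by_cases hpD : p.2 ∈ D
        · left; exact ⟨Set.mem_univ _, hpD⟩
        · right; exact ⟨hp, Set.mem_univ _, hpD⟩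
      refine measure_mono_null hsplit (le_antisymm ?_ (by simp))
      refine le_trans (measure_union_le _ _) ?_
      have h1 : (μ.prod (Measure.pi fun _ : Fin k => μ)) (Set.univ ×ˢ D) = 0 := by
        rw [Measure.prod_prod, hIH, mul_zero]
      have h2 : (μ.prod (Measure.pi fun _ : Fin k => μ)) (Bad' ∩ (Set.univ ×ˢ Dᶜ)) = 0 := by
        have hmeas2 : MeasurableSet (Bad' ∩ (Set.univ ×ˢ Dᶜ)) :=
          hBmeas.inter (MeasurableSet.univ.prod hDmeas.compl)
        rw [Measure.prod_apply_symm hmeas2]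
        have hnull : ∀ η : Fin k → ℝ × ℝ,
            μ ((fun x => (x, η)) ⁻¹' (Bad' ∩ (Set.univ ×ˢ Dᶜ))) = 0 := by
          intro η
          by_cases hη : η ∈ D
          · convert measure_empty (μ := μ)
            rw [Set.eq_empty_iff_forall_notMem]
            rintro x ⟨-, -, hx2⟩
            exact hx2 hη
          · -- η good : tail is linearly independent
            have hLI : LinearIndependent ℂ (fun j => vfun r s (η j)) := not_not.mp hη
            obtain ⟨b, ⟨q₀, hq₀⟩, hann⟩ := annihilator hkN (fun j => vfun r s (η j))
            refine measure_mono_null ?_ (hac (key_null r s hdist b q₀ hq₀))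
            rintro x ⟨hx1, -⟩
            have hx1' : ¬ LinearIndependent ℂ
                (Fin.cons (vfun r s x) (fun j => vfun r s (η j)) : Fin (k+1) → Fin N → ℂ) := hx1
            rw [linearIndependent_fin_cons] at hx1'
            push_neg at hx1'
            exact hann _ (hx1' hLI)
        simp only [hnull]
        simp
      rw [h1, h2, add_zero]
    -- transfer to the pi measure
    have hmp := measurePreserving_piFinSuccAbove (fun _ : Fin (k + 1) => μ) 0
    have hpre :
        {ξ : Fin (k+1) → ℝ × ℝ | ¬ LinearIndependent ℂ (fun p => vfun r s (ξ p))} =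
          (MeasurableEquiv.piFinSuccAbove (fun _ : Fin (k+1) => ℝ × ℝ) 0) ⁻¹' Bad' := by
      ext ξ
      simp only [Set.mem_preimage, Set.mem_setOf_eq, hBad']
      have hEq : (Fin.cons
          (vfun r s (((MeasurableEquiv.piFinSuccAbove (fun _ : Fin (k+1) => ℝ × ℝ) 0) ξ).1))
          (fun j => vfun r s (((MeasurableEquiv.piFinSuccAbove
            (fun _ : Fin (k+1) => ℝ × ℝ) 0) ξ).2 j)) : Fin (k+1) → Fin N → ℂ)
          = fun p => vfun r s (ξ p) := by
        funext p
        refine Fin.cases ?_ ?_ p <;>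
          simp [MeasurableEquiv.piFinSuccAbove, Fin.removeNth, Fin.insertNthEquiv, Fin.tail]
      rw [hEq]
    rw [hpre, hmp.measure_preimage hBmeas.nullMeasurableSet]
    exact hprod

/-- Lemma 4 of the paper: with points `ξ₁,…,ξ_K` drawn i.i.d. from an
absolutely continuous probability measure on `[0,π] × [0,2π]`, the `K × N`
matrix of generalized trigonometric monomials
`g_{pq} = (cos θ_p)^{r_q} (sin θ_p)^{|s_q|} e^{i φ_p s_q}` (with distinct
exponent pairs, `N ≥ K`) has full row rank `K` almost surely. -/
theorem stmt_8 (K N : ℕ) (hK : 1 ≤ K) (hKN : K ≤ N)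
    (r : Fin N → ℕ) (s : Fin N → ℤ)
    (hdist : Function.Injective (fun q => (r q, s q)))
    (μ : Measure (ℝ × ℝ)) [IsProbabilityMeasure μ] (hac : μ ≪ volume)
    (hsupp : μ (Set.Icc 0 π ×ˢ Set.Icc 0 (2 * π))ᶜ = 0) :
    (Measure.pi fun _ : Fin K => μ)
      {ξ : Fin K → ℝ × ℝ |
        (Matrix.of fun (p : Fin K) (q : Fin N) =>
          (Real.cos (ξ p).1 : ℂ) ^ (r q) * (Real.sin (ξ p).1 : ℂ) ^ (s q).natAbs *
            Complex.exp (Complex.I * s q * (ξ p).2)).rank ≠ K}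
      = 0 := by
  have hsub : {ξ : Fin K → ℝ × ℝ |
        (Matrix.of fun (p : Fin K) (q : Fin N) =>
          (Real.cos (ξ p).1 : ℂ) ^ (r q) * (Real.sin (ξ p).1 : ℂ) ^ (s q).natAbs *
            Complex.exp (Complex.I * s q * (ξ p).2)).rank ≠ K} ⊆
      {ξ : Fin K → ℝ × ℝ | ¬ LinearIndependent ℂ (fun p => vfun r s (ξ p))} := by
    intro ξ hξ
    simp only [Set.mem_setOf_eq] at hξ ⊢
    intro hLI
    apply hξ
    rw [Matrix.rank_eq_finrank_span_row]
    show Module.finrank ℂ (Submodule.span ℂ (Set.range fun p => vfun r s (ξ p))) = K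
    rw [finrank_span_eq_card hLI]
    simp
  exact measure_mono_null hsub (indep_null r s hdist μ hac K hKN)
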